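/- Let R be a Prüfer domain and I an ideal of R that is n-absorbing for a positive integer n. Then I[X] is an n-absorbing ideal of R[X]. -/

import Mathlib

open Polynomial

/-- A proper ideal `I` is `n`-absorbing if whenever a product of `n+1` elements lies in `I`,
the product of some `n` of them lies in `I`. -/
def IsNAbsorbing {R : Type*} [CommRing R] (I : Ideal R) (n : ℕ) : Prop :=
  I ≠ ⊤ ∧ ∀ x : Fin (n + 1) → R, (∏ i, x i) ∈ I →
    ∃ j, (∏ i ∈ Finset.univ.erase j, x i) ∈ I

/-- A proper ideal `I` is strongly `n`-absorbing if whenever a product of `n+1` ideals is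
contained in `I`, the product of some `n` of them is contained in `I`. -/
def IsStronglyNAbsorbing {R : Type*} [CommRing R] (I : Ideal R) (n : ℕ) : Prop :=
  I ≠ ⊤ ∧ ∀ J : Fin (n + 1) → Ideal R, (∏ i, J i) ≤ I →
    ∃ j, (∏ i ∈ Finset.univ.erase j, J i) ≤ I

/-- The content of a polynomial: the ideal generated by its coefficients. -/
def polyContent {R : Type*} [CommRing R] (f : R[X]) : Ideal R :=
  Ideal.span (Set.range f.coeff)

/-- A Prüfer domain: every nonzero finitely generated ideal is invertible as a fractional
ideal. -/
def IsPruferDomain (R : Type*) [CommRing R] [IsDomain R] : Prop :=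
  ∀ I : Ideal R, I.FG → I ≠ ⊥ →
    ∃ J : FractionalIdeal (nonZeroDivisors R) (FractionRing R),
      (I : FractionalIdeal (nonZeroDivisors R) (FractionRing R)) * J = 1

section LocalDvd

set_option linter.unusedSectionVars false

variable {R : Type*} [CommRing R] [IsDomain R]

/-- `a` divides `b` locally at the prime `M`. -/
def LocDvd (M : Ideal R) (a b : R) : Prop := ∃ s, s ∉ M ∧ ∃ r, s * b = r * a

/-- `x` belongs to `I` locally at `M`. -/
def LocMem (M I : Ideal R) (x : R) : Prop := ∃ u, u ∉ M ∧ u * x ∈ I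

variable {M : Ideal R}

lemma locDvd_refl (hM : M.IsPrime) (a : R) : LocDvd M a a :=
  ⟨1, by simpa using hM.ne_top ∘ (Ideal.eq_top_iff_one M).mpr, 1, by ring⟩

lemma locDvd_zero (hM : M.IsPrime) (a : R) : LocDvd M a 0 :=
  ⟨1, by simpa using hM.ne_top ∘ (Ideal.eq_top_iff_one M).mpr, 0, by ring⟩

lemma one_locDvd (hM : M.IsPrime) (a : R) : LocDvd M 1 a :=
  ⟨1, by simpa using hM.ne_top ∘ (Ideal.eq_top_iff_one M).mpr, a, by ring⟩

lemma not_mem_mul {s t : R} (hM : M.IsPrime) (hs : s ∉ M) (ht : t ∉ M) : s * t ∉ M :=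
  fun h => ((hM.mem_or_mem h).elim hs ht)

lemma locDvd_trans (hM : M.IsPrime) {a b c : R} (h1 : LocDvd M a b) (h2 : LocDvd M b c) :
    LocDvd M a c := by
  obtain ⟨s, hs, r, h⟩ := h1
  obtain ⟨s', hs', r', h'⟩ := h2
  exact ⟨s' * s, not_mem_mul hM hs' hs, r' * r, by
    calc s' * s * c = s * (s' * c) := by ring
    _ = s * (r' * b) := by rw [h']
    _ = r' * (s * b) := by ring
    _ = r' * (r * a) := by rw [h]
    _ = r' * r * a := by ring⟩

lemma locDvd_mul (hM : M.IsPrime) {a b c d : R} (h1 : LocDvd M a b) (h2 : LocDvd M c d) :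
    LocDvd M (a * c) (b * d) := by
  obtain ⟨s, hs, r, h⟩ := h1
  obtain ⟨s', hs', r', h'⟩ := h2
  exact ⟨s * s', not_mem_mul hM hs hs', r * r', by
    calc s * s' * (b * d) = (s * b) * (s' * d) := by ring
    _ = (r * a) * (r' * c) := by rw [h, h']
    _ = r * r' * (a * c) := by ring⟩

lemma locDvd_add {a b c : R} (hM : M.IsPrime) (h1 : LocDvd M a b) (h2 : LocDvd M a c) :
    LocDvd M a (b + c) := by
  obtain ⟨s, hs, r, h⟩ := h1
  obtain ⟨s', hs', r', h'⟩ := h2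
  exact ⟨s * s', not_mem_mul hM hs hs', s' * r + s * r', by
    calc s * s' * (b + c) = s' * (s * b) + s * (s' * c) := by ring
    _ = s' * (r * a) + s * (r' * a) := by rw [h, h']
    _ = (s' * r + s * r') * a := by ring⟩

lemma locDvd_mul_right {a b : R} (c : R) (h : LocDvd M a b) : LocDvd M a (c * b) := by
  obtain ⟨s, hs, r, h⟩ := h
  exact ⟨s, hs, c * r, by
    calc s * (c * b) = c * (s * b) := by ring
    _ = c * (r * a) := by rw [h]
    _ = c * r * a := by ring⟩

lemma locDvd_sum {ι : Type*} (hM : M.IsPrime) {a : R} {T : Finset ι} {z : ι → R}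
    (h : ∀ t ∈ T, LocDvd M a (z t)) : LocDvd M a (∑ t ∈ T, z t) := by
  classical
  induction T using Finset.induction with
  | empty => simpa using locDvd_zero hM a
  | insert _ _ hnotmem ih =>
    rename_i j T'
    rw [Finset.sum_insert hnotmem]
    exact locDvd_add hM (h j (Finset.mem_insert_self _ _))
      (ih fun t ht => h t (Finset.mem_insert_of_mem ht))

lemma locMem_of_mem {I : Ideal R} {x : R} (hM : M.IsPrime) (h : x ∈ I) : LocMem M I x :=
  ⟨1, by simpa using hM.ne_top ∘ (Ideal.eq_top_iff_one M).mpr, by simpa using h⟩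

lemma locMem_of_locDvd {I : Ideal R} {z w : R} (hM : M.IsPrime)
    (hz : LocMem M I z) (h : LocDvd M z w) : LocMem M I w := by
  obtain ⟨u, hu, huz⟩ := hz
  obtain ⟨s, hs, r, hsr⟩ := h
  exact ⟨u * s, not_mem_mul hM hu hs, by
    have : u * s * w = r * (u * z) := by
      calc u * s * w = u * (s * w) := by ring
      _ = u * (r * z) := by rw [hsr]
      _ = r * (u * z) := by ring
    rw [this]; exact Ideal.mul_mem_left _ _ huz⟩

lemma mem_of_forall_locMem {I : Ideal R} {x : R}
    (h : ∀ M : Ideal R, M.IsMaximal → LocMem M I x) : x ∈ I := by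
  by_contra hx
  have hT : I.colon (Ideal.span {x}) ≠ ⊤ := by
    intro ht
    have : (1 : R) ∈ I.colon (Ideal.span {x}) := ht ▸ Submodule.mem_top
    rw [Ideal.mem_colon_span_singleton] at this
    simp only [one_mul] at this
    exact hx this
  obtain ⟨M, hmax, hle⟩ := Ideal.exists_le_maximal _ hT
  obtain ⟨u, hu, hux⟩ := h M hmax
  exact hu (hle (by rw [Ideal.mem_colon_span_singleton]; exact hux))

lemma locDvd_total (hR : IsPruferDomain R) {M : Ideal R} (hM : M ≠ ⊤) (a b : R) :
    LocDvd M a b ∨ LocDvd M b a := by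
  have h1M : (1 : R) ∉ M := fun h => hM ((Ideal.eq_top_iff_one M).mpr h)
  by_cases ha : a = 0
  · exact Or.inr ⟨1, h1M, 0, by rw [ha]; ring⟩
  by_cases hb : b = 0
  · exact Or.inl ⟨1, h1M, 0, by rw [hb]; ring⟩
  set J : Ideal R := Ideal.span {a, b} with hJ
  classical
  have hfg : J.FG := ⟨({a, b} : Finset R), by simp [hJ]⟩
  have haJ : a ∈ J := Ideal.subset_span (by simp)
  have hbJ : b ∈ J := Ideal.subset_span (by simp)
  have hne : J ≠ ⊥ := by
    intro h
    rw [h, Ideal.mem_bot] at haJ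
    exact ha haJ
  obtain ⟨K, hK⟩ := hR J hfg hne
  set P := FractionRing R
  have hinj : Function.Injective (algebraMap R P) := IsFractionRing.injective R P
  -- 1 is in the submodule product
  have h2 : (1 : P) ∈ (↑(J : FractionalIdeal (nonZeroDivisors R) P) : Submodule R P) *
      (↑K : Submodule R P) := by
    rw [← FractionalIdeal.coe_mul, hK, FractionalIdeal.coe_one]
    exact Submodule.mem_one.mpr ⟨1, map_one _⟩
  -- the motive
  set alg := algebraMap R P with halg
  have key : ∀ z : P, z ∈ (↑(J : FractionalIdeal (nonZeroDivisors R) P) : Submodule R P) *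
      (↑K : Submodule R P) →
      ∃ c d E : R, alg c = z * alg a ∧ alg d = z * alg b ∧ c = a * E ∧ d = b * E ∧
        (E ∈ M ∨ LocDvd M a b ∨ LocDvd M b a) := by
    intro z hz
    refine Submodule.mul_induction_on hz ?_ ?_
    · intro m hm k hk
      obtain ⟨j, hjJ, hjm⟩ := (FractionalIdeal.mem_coeIdeal _).mp
        (FractionalIdeal.mem_coe.mp hm)
      have hjJ' : j ∈ Ideal.span {a, b} := hJ ▸ hjJ
      obtain ⟨α, β, hj⟩ := Ideal.mem_span_pair.mp hjJ'
      -- shadows of k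
      have hshadow : ∀ t ∈ J, ∃ ct : R, alg ct = k * alg t := by
        intro t htJ
        have h1 : alg t ∈ (↑(J : FractionalIdeal (nonZeroDivisors R) P) : Submodule R P) :=
          FractionalIdeal.mem_coe.mpr
            ((FractionalIdeal.mem_coeIdeal _).mpr ⟨t, htJ, rfl⟩)
        have h2 : k * alg t ∈ (↑K : Submodule R P) *
            (↑(J : FractionalIdeal (nonZeroDivisors R) P) : Submodule R P) :=
          Submodule.mul_mem_mul hk h1
        rw [mul_comm, ← FractionalIdeal.coe_mul, hK, FractionalIdeal.coe_one] at h2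
        obtain ⟨ct, hct⟩ := Submodule.mem_one.mp h2
        exact ⟨ct, hct⟩
      obtain ⟨ca, hca⟩ := hshadow a haJ
      obtain ⟨cb, hcb⟩ := hshadow b hbJ
      have hrel : ca * b = cb * a := by
        apply hinj
        rw [map_mul, map_mul, hca, hcb]
        ring
      refine ⟨ca * j, cb * j, α * ca + β * cb, ?_, ?_, ?_, ?_, ?_⟩
      · rw [map_mul, hca, ← hjm]; ring
      · rw [map_mul, hcb, ← hjm]; ring
      · rw [← hj]
        calc ca * (α * a + β * b) = α * (a * ca) + β * (ca * b) := by ring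
        _ = α * (a * ca) + β * (cb * a) := by rw [hrel]
        _ = a * (α * ca + β * cb) := by ring
      · rw [← hj]
        calc cb * (α * a + β * b) = α * (cb * a) + β * (b * cb) := by ring
        _ = α * (ca * b) + β * (b * cb) := by rw [hrel]
        _ = b * (α * ca + β * cb) := by ring
      · by_cases hEM : α * ca + β * cb ∈ M
        · exact Or.inl hEM
        · by_cases hcaM : ca ∈ M
          · have hcbM : cb ∉ M := by
              intro hcbM
              exact hEM (M.add_mem (M.mul_mem_left _ hcaM) (M.mul_mem_left _ hcbM))
            exact Or.inr (Or.inr ⟨cb, hcbM, ca, by rw [hrel]⟩)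
          · exact Or.inr (Or.inl ⟨ca, hcaM, cb, by rw [← hrel]⟩)
    · rintro z1 z2 ⟨c1, d1, E1, hc1, hd1, hce1, hde1, hd1'⟩ ⟨c2, d2, E2, hc2, hd2, hce2, hde2, hd2'⟩
      refine ⟨c1 + c2, d1 + d2, E1 + E2, ?_, ?_, by rw [hce1, hce2]; ring,
        by rw [hde1, hde2]; ring, ?_⟩
      · rw [map_add, hc1, hc2]; ring
      · rw [map_add, hd1, hd2]; ring
      · rcases hd1' with h | h
        · rcases hd2' with h' | h'
          · exact Or.inl (M.add_mem h h')
          · exact Or.inr h'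
        · exact Or.inr h
  obtain ⟨c, d, E, hc, hd, hcE, _, hdisj⟩ := key 1 h2
  rw [one_mul] at hc
  have hca : c = a := hinj hc
  have hE1 : E = 1 := by
    have : a * E = a * 1 := by rw [mul_one, ← hcE, hca]
    exact mul_left_cancel₀ ha this
  rcases hdisj with h | h
  · exact absurd (hE1 ▸ h) h1M
  · exact h

lemma one_not_mem {M : Ideal R} (hM : M.IsPrime) : (1 : R) ∉ M :=
  fun h => hM.ne_top ((Ideal.eq_top_iff_one M).mpr h)

lemma add_not_mem_left {M : Ideal R} {x y : R} (hx : x ∈ M) (hy : y ∉ M) : x + y ∉ M :=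
  fun h => hy (by simpa using M.sub_mem h hx)

lemma locDvd_strict {M : Ideal R} (hM : M.IsPrime) {a b : R} (hab : LocDvd M a b)
    (hnot : ¬ LocDvd M b a) : ∃ u, u ∉ M ∧ ∃ r, r ∈ M ∧ u * b = r * a := by
  obtain ⟨s, hs, r, h⟩ := hab
  by_cases hr : r ∈ M
  · exact ⟨s, hs, r, hr, h⟩
  · exact absurd ⟨r, hr, s, h.symm⟩ hnot

lemma locDvd_mutual {M : Ideal R} (hM : M.IsPrime) {D c : R} (hD : D ≠ 0)
    (h1 : LocDvd M D c) (h2 : LocDvd M c D) :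
    ∃ s, s ∉ M ∧ ∃ r, r ∉ M ∧ s * c = r * D := by
  obtain ⟨s, hs, r, h⟩ := h1
  obtain ⟨s', hs', r', h'⟩ := h2
  refine ⟨s, hs, r, ?_, h⟩
  intro hrM
  have heq : (s * s') * D = (r * r') * D := by
    calc (s * s') * D = s * (s' * D) := by ring
    _ = s * (r' * c) := by rw [h']
    _ = r' * (s * c) := by ring
    _ = r' * (r * D) := by rw [h]
    _ = (r * r') * D := by ring
  have h2' : s * s' = r * r' := mul_right_cancel₀ hD heq
  exact not_mem_mul hM hs hs' (h2' ▸ M.mul_mem_right r' hrM)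

lemma locDvd_sum_strict {ι : Type*} {M : Ideal R} (hM : M.IsPrime) (T : Finset ι) (z : ι → R)
    (w : R) (h : ∀ t ∈ T, ∃ u, u ∉ M ∧ ∃ r, r ∈ M ∧ u * z t = r * w) :
    ∃ u, u ∉ M ∧ ∃ r, r ∈ M ∧ u * (∑ t ∈ T, z t) = r * w := by
  classical
  induction T using Finset.induction with
  | empty => exact ⟨1, one_not_mem hM, 0, M.zero_mem, by simp⟩
  | insert _ _ hnm ih =>
    rename_i j T'
    obtain ⟨u1, hu1, r1, hr1, h1⟩ := h j (Finset.mem_insert_self _ _)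
    obtain ⟨u2, hu2, r2, hr2, h2⟩ := ih fun t ht => h t (Finset.mem_insert_of_mem ht)
    refine ⟨u1 * u2, not_mem_mul hM hu1 hu2, u2 * r1 + u1 * r2,
      M.add_mem (M.mul_mem_left _ hr1) (M.mul_mem_left _ hr2), ?_⟩
    rw [Finset.sum_insert hnm]
    calc u1 * u2 * (z j + ∑ t ∈ T', z t)
        = u2 * (u1 * z j) + u1 * (u2 * ∑ t ∈ T', z t) := by ring
    _ = u2 * (r1 * w) + u1 * (r2 * w) := by rw [h1, h2]
    _ = (u2 * r1 + u1 * r2) * w := by ring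

lemma exists_locMin_coeff (hR : IsPruferDomain R) {M : Ideal R} (hM : M.IsPrime) (f : R[X]) :
    ∃ i, ∀ k, LocDvd M (f.coeff i) (f.coeff k) := by
  classical
  have main : ∀ s : Finset ℕ, ∃ i, ∀ k ∈ s, LocDvd M (f.coeff i) (f.coeff k) := by
    intro s
    induction s using Finset.induction with
    | empty => exact ⟨0, fun k hk => absurd hk (by simp)⟩
    | insert _ _ hnm ih =>
      rename_i j T
      obtain ⟨i, hi⟩ := ih
      rcases locDvd_total hR hM.ne_top (f.coeff i) (f.coeff j) with hc | hc
      · refine ⟨i, fun k hk => ?_⟩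
        rcases Finset.mem_insert.mp hk with rfl | hk
        · exact hc
        · exact hi k hk
      · refine ⟨j, fun k hk => ?_⟩
        rcases Finset.mem_insert.mp hk with rfl | hk
        · exact locDvd_refl hM _
        · exact locDvd_trans hM hc (hi k hk)
  obtain ⟨i, hi⟩ := main f.support
  refine ⟨i, fun k => ?_⟩
  by_cases hk : k ∈ f.support
  · exact hi k hk
  · rw [Polynomial.notMem_support_iff.mp hk]
    exact locDvd_zero hM _

lemma eq_zero_of_locDvd_zero {M : Ideal R} (hM : M.IsPrime) {c : R}
    (h : LocDvd M 0 c) : c = 0 := by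
  obtain ⟨s, hs, r, hsr⟩ := h
  have hs0 : s ≠ 0 := fun h0 => hs (h0 ▸ M.zero_mem)
  have : s * c = 0 := by rw [hsr]; ring
  rcases mul_eq_zero.mp this with h | h
  · exact absurd h hs0
  · exact h

lemma locDvd_coeff_mul {M : Ideal R} (hM : M.IsPrime) {f g : R[X]} {a b : R}
    (haf : ∀ k, LocDvd M a (f.coeff k)) (hbg : ∀ k, LocDvd M b (g.coeff k)) :
    ∀ k, LocDvd M (a * b) ((f * g).coeff k) := by
  intro k
  rw [Polynomial.coeff_mul]
  exact locDvd_sum hM fun t _ => locDvd_mul hM (haf t.1) (hbg t.2)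

lemma gauss_pair (hR : IsPruferDomain R) {M : Ideal R} (hM : M.IsPrime) {f g : R[X]}
    {df dg : ℕ} (hdf : ∀ k, LocDvd M (f.coeff df) (f.coeff k))
    (hdg : ∀ k, LocDvd M (g.coeff dg) (g.coeff k)) :
    ∃ k, LocDvd M ((f * g).coeff k) (f.coeff df * g.coeff dg) ∧
      LocDvd M (f.coeff df * g.coeff dg) ((f * g).coeff k) := by
  classical
  have hrev : LocDvd M (f.coeff df * g.coeff dg) ((f * g).coeff 0) ∧ True → True := fun _ => trivial
  by_cases hD : f.coeff df = 0
  · have hf : f = 0 := by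
      ext k
      simpa using eq_zero_of_locDvd_zero hM (hD ▸ hdf k)
    refine ⟨0, ?_, ?_⟩ <;> simp [hf, hD] <;> exact locDvd_refl hM 0
  by_cases hE : g.coeff dg = 0
  · have hg : g = 0 := by
      ext k
      simpa using eq_zero_of_locDvd_zero hM (hE ▸ hdg k)
    refine ⟨0, ?_, ?_⟩ <;> simp [hg, hE] <;> exact locDvd_refl hM 0
  set D := f.coeff df with hDdef
  set E := g.coeff dg with hEdef
  have hexi : ∃ i, LocDvd M (f.coeff i) D := ⟨df, locDvd_refl hM _⟩
  have hexj : ∃ j, LocDvd M (g.coeff j) E := ⟨dg, locDvd_refl hM _⟩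
  set i0 := Nat.find hexi with hi0def
  set j0 := Nat.find hexj with hj0def
  have hi0 : LocDvd M (f.coeff i0) D := Nat.find_spec hexi
  have hj0 : LocDvd M (g.coeff j0) E := Nat.find_spec hexj
  have hi0min : ∀ i < i0, ¬ LocDvd M (f.coeff i) D := fun i hi => Nat.find_min hexi hi
  have hj0min : ∀ j < j0, ¬ LocDvd M (g.coeff j) E := fun j hj => Nat.find_min hexj hj
  obtain ⟨s1, hs1, r1, hr1, hsr1⟩ := locDvd_mutual hM hD (hdf i0) hi0
  obtain ⟨s2, hs2, r2, hr2, hsr2⟩ := locDvd_mutual hM hE (hdg j0) hj0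
  have hmem : (i0, j0) ∈ Finset.HasAntidiagonal.antidiagonal (i0 + j0) := by
    rw [Finset.HasAntidiagonal.mem_antidiagonal]
  have hsum : ∑ t ∈ (Finset.HasAntidiagonal.antidiagonal (i0 + j0)).erase (i0, j0), f.coeff t.1 * g.coeff t.2
      + f.coeff i0 * g.coeff j0 = (f * g).coeff (i0 + j0) := by
    rw [Polynomial.coeff_mul]
    exact Finset.sum_erase_add _ _ hmem
  have hterms : ∀ t ∈ (Finset.HasAntidiagonal.antidiagonal (i0 + j0)).erase (i0, j0),
      ∃ u, u ∉ M ∧ ∃ r, r ∈ M ∧ u * (f.coeff t.1 * g.coeff t.2) = r * (D * E) := by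
    rintro ⟨i, j⟩ ht
    obtain ⟨hne, hij⟩ := Finset.mem_erase.mp ht
    rw [Finset.HasAntidiagonal.mem_antidiagonal] at hij
    have hlt : i < i0 ∨ j < j0 := by
      by_contra hcon
      push_neg at hcon
      have hii : i = i0 := by omega
      have hjj : j = j0 := by omega
      exact hne (by rw [hii, hjj])
    rcases hlt with hlt | hlt
    · obtain ⟨u, hu, r, hr, hur⟩ := locDvd_strict hM (hdf i) (hi0min i hlt)
      obtain ⟨σ, hσ, τ, hστ⟩ := hdg j
      refine ⟨u * σ, not_mem_mul hM hu hσ, r * τ, M.mul_mem_right _ hr, ?_⟩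
      calc u * σ * (f.coeff i * g.coeff j) = (u * f.coeff i) * (σ * g.coeff j) := by ring
      _ = (r * D) * (τ * E) := by rw [hur, hστ]
      _ = (r * τ) * (D * E) := by ring
    · obtain ⟨u, hu, r, hr, hur⟩ := locDvd_strict hM (hdg j) (hj0min j hlt)
      obtain ⟨σ, hσ, τ, hστ⟩ := hdf i
      refine ⟨σ * u, not_mem_mul hM hσ hu, τ * r, M.mul_mem_left _ hr, ?_⟩
      calc σ * u * (f.coeff i * g.coeff j) = (σ * f.coeff i) * (u * g.coeff j) := by ring
      _ = (τ * D) * (r * E) := by rw [hστ, hur]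
      _ = (τ * r) * (D * E) := by ring
  obtain ⟨U, hU, ρ, hρ, hUρ⟩ := locDvd_sum_strict hM _ _ _ hterms
  refine ⟨i0 + j0, ⟨s1 * s2 * ρ + U * (r1 * r2),
      add_not_mem_left (M.mul_mem_left _ hρ)
        (not_mem_mul hM hU (not_mem_mul hM hr1 hr2)),
      U * (s1 * s2), ?_⟩, ?_⟩
  · calc (s1 * s2 * ρ + U * (r1 * r2)) * (D * E)
        = (s1 * s2) * (ρ * (D * E)) + U * ((r1 * D) * (r2 * E)) := by ring
    _ = (s1 * s2) * (U * ∑ t ∈ (Finset.HasAntidiagonal.antidiagonal (i0 + j0)).erase (i0, j0),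
          f.coeff t.1 * g.coeff t.2) + U * ((s1 * f.coeff i0) * (s2 * g.coeff j0)) := by
        rw [hUρ, hsr1, hsr2]
    _ = (U * (s1 * s2)) * (∑ t ∈ (Finset.HasAntidiagonal.antidiagonal (i0 + j0)).erase (i0, j0),
          f.coeff t.1 * g.coeff t.2 + f.coeff i0 * g.coeff j0) := by ring
    _ = (U * (s1 * s2)) * ((f * g).coeff (i0 + j0)) := by rw [hsum]
  · have hDall : ∀ k, LocDvd M D (f.coeff k) := hdf
    exact locDvd_coeff_mul hM hDall hdg (i0 + j0)

lemma coeff_mem_polyContent (f : R[X]) (k : ℕ) : f.coeff k ∈ polyContent f :=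
  Ideal.subset_span ⟨k, rfl⟩

lemma polyContent_le_iff {I : Ideal R} {f : R[X]} :
    polyContent f ≤ I ↔ ∀ k, f.coeff k ∈ I := by
  constructor
  · intro h k
    exact h (coeff_mem_polyContent f k)
  · intro h
    rw [polyContent, Ideal.span_le]
    rintro x ⟨k, rfl⟩
    exact h k

lemma locDvd_of_mem_polyContent {M : Ideal R} (hM : M.IsPrime) {f : R[X]} {a : R}
    (ha : ∀ k, LocDvd M a (f.coeff k)) : ∀ z ∈ polyContent f, LocDvd M a z := by
  intro z hz
  induction hz using Submodule.span_induction with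
  | mem x h =>
    obtain ⟨k, rfl⟩ := h
    exact ha k
  | zero => exact locDvd_zero hM a
  | add x y _ _ hx hy => exact locDvd_add hM hx hy
  | smul r x _ hx =>
    rw [smul_eq_mul]
    exact locDvd_mul_right _ hx

lemma prod_locDvd {M : Ideal R} (hM : M.IsPrime) {ι : Type*} (T : Finset ι) (J : ι → Ideal R)
    (a : ι → R) (h : ∀ i ∈ T, ∀ z ∈ J i, LocDvd M (a i) z) :
    ∀ z ∈ (∏ i ∈ T, J i), LocDvd M (∏ i ∈ T, a i) z := by
  classical
  induction T using Finset.induction with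
  | empty =>
    intro z hz
    simpa using one_locDvd hM z
  | insert _ _ hnm ih =>
    rename_i j T'
    rw [Finset.prod_insert hnm, Finset.prod_insert hnm]
    intro z hz
    refine Submodule.mul_induction_on hz ?_ ?_
    · intro m hm n hn
      exact locDvd_mul hM (h j (Finset.mem_insert_self _ _) m hm)
        (ih (fun i hi => h i (Finset.mem_insert_of_mem hi)) n hn)
    · intro x y hx hy
      exact locDvd_add hM hx hy

lemma gauss_prod (hR : IsPruferDomain R) {M : Ideal R} (hM : M.IsPrime) {ι : Type*}
    (f : ι → R[X]) (d : ι → ℕ)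
    (hd : ∀ i k, LocDvd M ((f i).coeff (d i)) ((f i).coeff k)) (T : Finset ι) :
    ∃ k, (∀ k', LocDvd M ((∏ i ∈ T, f i).coeff k) ((∏ i ∈ T, f i).coeff k')) ∧
      LocDvd M ((∏ i ∈ T, f i).coeff k) (∏ i ∈ T, (f i).coeff (d i)) ∧
      LocDvd M (∏ i ∈ T, (f i).coeff (d i)) ((∏ i ∈ T, f i).coeff k) := by
  classical
  induction T using Finset.induction with
  | empty =>
    refine ⟨0, fun k' => ?_, ?_, ?_⟩ <;>
      simp only [Finset.prod_empty, Polynomial.coeff_one, if_pos rfl]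
    · exact one_locDvd hM _
    · exact locDvd_refl hM 1
    · exact locDvd_refl hM 1
  | insert _ _ hnm ih =>
    rename_i j T'
    obtain ⟨k, hmin, h1, h2⟩ := ih
    obtain ⟨k', h1', h2'⟩ := gauss_pair hR hM (hd j) hmin
    rw [Finset.prod_insert hnm, Finset.prod_insert hnm]
    refine ⟨k', fun k'' => ?_, ?_, ?_⟩
    · exact locDvd_trans hM h1' (locDvd_coeff_mul hM (hd j) hmin k'')
    · exact locDvd_trans hM h1' (locDvd_mul hM (locDvd_refl hM _) h1)
    · exact locDvd_trans hM (locDvd_mul hM (locDvd_refl hM _) h2) h2'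

lemma prod_polyContent_le (hR : IsPruferDomain R) {I : Ideal R} {ι : Type*} (f : ι → R[X])
    (T : Finset ι) (h : ∀ k, (∏ i ∈ T, f i).coeff k ∈ I) :
    (∏ i ∈ T, polyContent (f i)) ≤ I := by
  classical
  intro z hz
  apply mem_of_forall_locMem
  intro M hmax
  have hM : M.IsPrime := hmax.isPrime
  have hch : ∀ i : ι, ∃ di, ∀ k, LocDvd M ((f i).coeff di) ((f i).coeff k) :=
    fun i => exists_locMin_coeff hR hM (f i)
  choose d hd using hch
  obtain ⟨k, _, h1, _⟩ := gauss_prod hR hM f d hd T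
  have hPD : LocMem M I (∏ i ∈ T, (f i).coeff (d i)) :=
    locMem_of_locDvd hM (locMem_of_mem hM (h k)) h1
  exact locMem_of_locDvd hM hPD
    (prod_locDvd hM T _ _ (fun i _ => locDvd_of_mem_polyContent hM (hd i)) z hz)

lemma coeff_prod_mem_prod_polyContent {ι : Type*} (f : ι → R[X]) (T : Finset ι) (k : ℕ) :
    (∏ i ∈ T, f i).coeff k ∈ ∏ i ∈ T, polyContent (f i) := by
  classical
  induction T using Finset.induction generalizing k with
  | empty => simp [Ideal.one_eq_top]
  | insert _ _ hnm ih =>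
    rename_i j T'
    rw [Finset.prod_insert hnm, Finset.prod_insert hnm, Polynomial.coeff_mul]
    exact Ideal.sum_mem _ fun t _ => Ideal.mul_mem_mul (coeff_mem_polyContent _ _) (ih t.2)

lemma strong_absorbing (hR : IsPruferDomain R) {I : Ideal R} {n : ℕ}
    (hI : IsNAbsorbing I n) (f : Fin (n + 1) → R[X])
    (hprod : (∏ i, polyContent (f i)) ≤ I) :
    ∃ j, (∏ i ∈ Finset.univ.erase j, polyContent (f i)) ≤ I := by
  classical
  by_contra hcon
  push_neg at hcon
  have hwit : ∀ j, ∃ x, x ∈ (∏ i ∈ Finset.univ.erase j, polyContent (f i)) ∧ x ∉ I :=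
    fun j => SetLike.not_le_iff_exists.mp (hcon j)
  choose x hxP hxI using hwit
  have hMex : ∀ j, ∃ M : Ideal R, M.IsMaximal ∧ I.colon (Ideal.span {x j}) ≤ M := by
    intro j
    apply Ideal.exists_le_maximal
    intro ht
    have h1 : (1 : R) ∈ I.colon (Ideal.span {x j}) := ht ▸ Submodule.mem_top
    rw [Ideal.mem_colon_span_singleton, one_mul] at h1
    exact hxI j h1
  choose Mf hMmax hMcolon using hMex
  set F : Finset (Ideal R) := Finset.image Mf Finset.univ with hF
  have hFmax : ∀ N ∈ F, N.IsMaximal := by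
    intro N hN
    obtain ⟨j, _, rfl⟩ := Finset.mem_image.mp hN
    exact hMmax j
  have heex : ∀ N : Ideal R, ∃ er : R, N ∈ F → (er ∉ N ∧ ∀ N' ∈ F, N' ≠ N → er ∈ N') := by
    intro N
    by_cases hN : N ∈ F
    · have hprime : N.IsPrime := (hFmax N hN).isPrime
      have hnle : ¬ (∏ N' ∈ F.erase N, N') ≤ N := by
        intro hle
        obtain ⟨N', hN', hle'⟩ := (Ideal.IsPrime.prod_le hprime).mp hle
        obtain ⟨hne, hN'F⟩ := Finset.mem_erase.mp hN'
        exact hne ((hFmax N' hN'F).eq_of_le hprime.ne_top hle')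
      obtain ⟨er, heP, heN⟩ := SetLike.not_le_iff_exists.mp hnle
      refine ⟨er, fun _ => ⟨heN, fun N' hN' hne => ?_⟩⟩
      have hle : (∏ N'' ∈ F.erase N, N'') ≤ N' := by
        calc (∏ N'' ∈ F.erase N, N'')
            = (∏ N'' ∈ (F.erase N).erase N', N'') * N' :=
              (Finset.prod_erase_mul _ _ (Finset.mem_erase.mpr ⟨hne, hN'⟩)).symm
        _ ≤ N' := Ideal.mul_le_right
      exact hle heP
    · exact ⟨0, fun h => absurd h hN⟩
  choose e he using heex
  have hdex : ∀ (j : Fin (n + 1)) (N : Ideal R), ∃ dj : ℕ,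
      N ∈ F → ∀ k, LocDvd N ((f j).coeff dj) ((f j).coeff k) := by
    intro j N
    by_cases hN : N ∈ F
    · obtain ⟨dj, hdj⟩ := exists_locMin_coeff hR ((hFmax N hN).isPrime) (f j)
      exact ⟨dj, fun _ => hdj⟩
    · exact ⟨0, fun h => absurd h hN⟩
  choose d hd using hdex
  set a : Fin (n + 1) → R := fun j => ∑ N ∈ F, e N * (f j).coeff (d j N) with ha
  have haC : ∀ j, a j ∈ polyContent (f j) :=
    fun j => Ideal.sum_mem _ fun N _ => Ideal.mul_mem_left _ _ (coeff_mem_polyContent _ _)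
  have hkey : ∀ (j : Fin (n + 1)) (N : Ideal R), N ∈ F →
      LocDvd N (a j) ((f j).coeff (d j N)) := by
    intro j N hN
    have hNP : N.IsPrime := (hFmax N hN).isPrime
    have hsplit : ∑ N' ∈ F.erase N, e N' * (f j).coeff (d j N') + e N * (f j).coeff (d j N)
        = a j := Finset.sum_erase_add _ _ hN
    have hterms : ∀ N' ∈ F.erase N, ∃ u, u ∉ N ∧ ∃ r, r ∈ N ∧
        u * (e N' * (f j).coeff (d j N')) = r * ((f j).coeff (d j N)) := by
      intro N' hN'
      obtain ⟨hne, hN'F⟩ := Finset.mem_erase.mp hN'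
      have heN' : e N' ∈ N := (he N' hN'F).2 N hN hne.symm
      obtain ⟨s, hs, r, hsr⟩ := hd j N hN (d j N')
      refine ⟨s, hs, e N' * r, N.mul_mem_right _ heN', ?_⟩
      calc s * (e N' * (f j).coeff (d j N')) = e N' * (s * (f j).coeff (d j N')) := by ring
      _ = e N' * (r * (f j).coeff (d j N)) := by rw [hsr]
      _ = (e N' * r) * (f j).coeff (d j N) := by ring
    obtain ⟨U, hU, ρ, hρ, hUρ⟩ := locDvd_sum_strict hNP _ _ _ hterms
    refine ⟨ρ + U * e N, add_not_mem_left hρ (not_mem_mul hNP hU (he N hN).1), U, ?_⟩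
    calc (ρ + U * e N) * (f j).coeff (d j N)
        = ρ * (f j).coeff (d j N) + U * (e N * (f j).coeff (d j N)) := by ring
    _ = U * (∑ N' ∈ F.erase N, e N' * (f j).coeff (d j N'))
        + U * (e N * (f j).coeff (d j N)) := by rw [← hUρ]
    _ = U * (∑ N' ∈ F.erase N, e N' * (f j).coeff (d j N')
        + e N * (f j).coeff (d j N)) := by ring
    _ = U * a j := by rw [hsplit]
  have hprodI : (∏ i, a i) ∈ I := hprod (Ideal.prod_mem_prod fun i _ => haC i)
  obtain ⟨k, hk⟩ := hI.2 a hprodI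
  have hNF : Mf k ∈ F := Finset.mem_image.mpr ⟨k, Finset.mem_univ _, rfl⟩
  have hNP : (Mf k).IsPrime := (hMmax k).isPrime
  have hdvd : LocDvd (Mf k) (∏ i ∈ Finset.univ.erase k, a i) (x k) :=
    prod_locDvd hNP _ _ _
      (fun i _ z hz => locDvd_trans hNP (hkey i (Mf k) hNF)
        (locDvd_of_mem_polyContent hNP (hd i (Mf k) hNF) z hz))
      (x k) (hxP k)
  obtain ⟨u, hu, hux⟩ := locMem_of_locDvd hNP (locMem_of_mem hNP hk) hdvd
  exact hu (hMcolon k (by rw [Ideal.mem_colon_span_singleton]; exact hux))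

end LocalDvd

/-- Over a Prüfer domain, if `I` is `n`-absorbing then `I[X]` is `n`-absorbing. -/
theorem isNAbsorbing_map_C {R : Type*} [CommRing R] [IsDomain R]
    (hR : IsPruferDomain R) (I : Ideal R) (n : ℕ) (hn : 0 < n)
    (hI : IsNAbsorbing I n) : IsNAbsorbing (I.map (C : R →+* R[X])) n := by
  classical
  constructor
  · intro ht
    have h1 : (1 : R[X]) ∈ I.map (C : R →+* R[X]) := ht ▸ Submodule.mem_top
    rw [Ideal.mem_map_C_iff] at h1
    have h0 := h1 0
    rw [Polynomial.coeff_one, if_pos rfl] at h0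
    exact hI.1 ((Ideal.eq_top_iff_one I).mpr h0)
  · intro x hx
    rw [Ideal.mem_map_C_iff] at hx
    have hle : (∏ i, polyContent (x i)) ≤ I :=
      prod_polyContent_le hR x Finset.univ hx
    obtain ⟨j, hj⟩ := strong_absorbing hR hI x hle
    refine ⟨j, ?_⟩
    rw [Ideal.mem_map_C_iff]
    intro k
    exact hj (coeff_prod_mem_prod_polyContent x _ k)
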